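/- Let λ = (r^c, t) with 0 < t ≤ r, a partition of n. Then the cylindric Schur function s_{(r^c t)/∅/1}(x) equals Σ_{μ ⊢ n, μ_1 ≤ r} m_μ(x), the sum of all monomial symmetric functions indexed by partitions of n with largest part at most r. -/

import Mathlib

open MvPolynomial
open scoped Classical

noncomputable section

/-- A poset is `(3+1)`-free: no induced subposet consisting of a 3-chain
together with an element incomparable to all of it. -/
def ThreePlusOneFree (P : Type*) [PartialOrder P] : Prop :=
  ¬ ∃ a b c x : P, a < b ∧ b < c ∧
    ¬(x ≤ a ∨ a ≤ x) ∧ ¬(x ≤ b ∨ b ≤ x) ∧ ¬(x ≤ c ∨ c ≤ x)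

/-- The `P`-elementary function `e_k^P(u)`, the sum of `u_{i_1} ⋯ u_{i_k}`
over strict chains `i_1 <_P ⋯ <_P i_k`. -/
def eP (P : Type*) [Fintype P] [PartialOrder P] (k : ℕ) : MvPolynomial P ℤ :=
  ∑ f ∈ Finset.univ.filter (fun f : Fin k → P => ∀ a b : Fin k, a < b → f a < f b),
    ∏ i, X (f i)

/-- `e_k^P` for an integer index, vanishing for negative `k`. -/
def ePz (P : Type*) [Fintype P] [PartialOrder P] (k : ℤ) : MvPolynomial P ℤ :=
  if 0 ≤ k then eP P k.toNat else 0

/-- Conjugate partition: `conj f c` is the length of column `c` (0-indexed)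
of the diagram of `f`. -/
def conj (f : ℕ → ℕ) (c : ℕ) : ℕ := Set.ncard {i | c < f i}

/-- `f : ℕ → ℕ` (0-indexed list of parts) is a partition. -/
def IsPartition (f : ℕ → ℕ) : Prop := (∀ i, f (i + 1) ≤ f i) ∧ ∃ N, ∀ i, N ≤ i → f i = 0

/-- `λ/μ/d` is a cylindric shape. -/
def IsCylShape (lam mu : ℕ → ℕ) (d : ℕ) : Prop :=
  IsPartition lam ∧ IsPartition mu ∧ (∀ i, mu i ≤ lam i) ∧ 0 < lam 0 ∧
    conj lam 0 ≤ conj lam (lam 0 - 1) + d ∧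
    conj mu 0 ≤ conj mu (lam 0 - 1) + d ∧ d ≤ conj lam 0

section Arrays
variable {P : Type*} [PartialOrder P]

/-- Column-strictness of the array `A` (a total function; only values on the cells
of the shape `col(α,β)`, over `l` columns, matter): entries strictly increase
down each column. This is the defining condition for a `P`-array. -/
def ColStrict (A : ℕ → ℕ → P) (l : ℕ) (α β : ℕ → ℕ) : Prop :=
  ∀ c r r', c < l → β c ≤ r → r < r' → r' < α c → A r c < A r' c

/-- `col(α,β)` (with `β` a partition) is a skew partition shape. -/
def IsSkewShape (l : ℕ) (α β : ℕ → ℕ) : Prop :=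
  (∀ c, c + 1 < l → α (c + 1) ≤ α c ∧ β (c + 1) ≤ β c) ∧ ∀ c, c < l → β c ≤ α c

/-- Rows of `A` are weakly increasing in `P`: no entry is `>_P` its right neighbour. -/
def RowWeak (A : ℕ → ℕ → P) (l : ℕ) (α β : ℕ → ℕ) : Prop :=
  ∀ r c, c + 1 < l → β c ≤ r → r < α c → β (c + 1) ≤ r → r < α (c + 1) →
    ¬ A r (c + 1) < A r c

/-- `A` is a `P`-tableau of shape `col(α,β)`. -/
def IsPTableau (A : ℕ → ℕ → P) (l : ℕ) (α β : ℕ → ℕ) : Prop :=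
  IsSkewShape l α β ∧ ColStrict A l α β ∧ RowWeak A l α β

/-- The glued array `A^d`: columns `0,…,l-1` of `A` shifted down by `d`, and a copy
of column `0` of `A` as the extra column `l`. -/
def glueArr (A : ℕ → ℕ → P) (l d : ℕ) : ℕ → ℕ → P :=
  fun r c => if c < l then A (r - d) c else A r 0

/-- Column lengths of the glued shape. -/
def glueCol (f : ℕ → ℕ) (l d : ℕ) : ℕ → ℕ :=
  fun c => if c < l then f c + d else f 0

/-- `(r,j)` is an intersection point of columns `i < j` of `A`
(shape `col(α,β)`), with witness in column `i`. -/
def IsIntPoint (A : ℕ → ℕ → P) (α β : ℕ → ℕ) (i j r : ℕ) : Prop :=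
  i < j ∧ β j ≤ r ∧ r < α j ∧
    ∃ w, w + j = r + 1 + i ∧ β i ≤ w ∧ (α i ≤ w ∨ A r j < A w i)

/-- Columns `i < j` of `A` intersect. -/
def Intersecting (A : ℕ → ℕ → P) (α β : ℕ → ℕ) (i j : ℕ) : Prop :=
  ∃ r, IsIntPoint A α β i j r

/-- `(r,j)` is a `P`-minimal intersection point of the array `A` with columns `0,…,L`. -/
def PMinIP (A : ℕ → ℕ → P) (α β : ℕ → ℕ) (L j r : ℕ) : Prop :=
  j ≤ L ∧ (∃ i, IsIntPoint A α β i j r) ∧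
    ∀ j' r' i', j' ≤ L → IsIntPoint A α β i' j' r' → ¬ A r' j' < A r j

/-- `(r,j)` is the rightmost `P`-minimal intersection point. -/
def RightmostPMinIP (A : ℕ → ℕ → P) (α β : ℕ → ℕ) (L j r : ℕ) : Prop :=
  PMinIP A α β L j r ∧ ∀ j' r', PMinIP A α β L j' r' → j' ≤ j

/-- The cylindric swap `swap(A,i,j,d)` at the `P`-minimal intersection point `m` of
columns `i < j ≤ l` of `A^d` (the minimal intersection point is the lowest-row one,
since column `j` is a chain).  Everything is in the coordinates of `A`; the case
`j = l` is the wrap-around case, where entries move between column `i` and column `0`. -/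
def swapArr (A : ℕ → ℕ → P) (l d i j : ℕ) (α β : ℕ → ℕ) : ℕ → ℕ → P :=
  let m := sInf {r | IsIntPoint (glueArr A l d) (glueCol α l d) (glueCol β l d) i j r}
  if j < l then
    fun r c =>
      if c = i ∧ m + 1 + i ≤ r + j + d then A (r + (j - i)) j
      else if c = j ∧ m + 1 ≤ r + d then A (r - (j - i)) i
      else A r c
  else
    fun r c =>
      if c = i ∧ m + 1 + i ≤ r + j + d then A (r + (j - i) + d) 0
      else if c = 0 ∧ m + 1 ≤ r then A (r - (d + (j - i))) i
      else A r c

end Arrays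

/-- A cylindric `P`-tableau of shape `λ/μ/d`, encoded column by column:
`T c p` is the entry of column `c` in the `p`-th cell from the top
(global row `conj μ c + p`).  The condition is that the glued filling `T^d`
is a `P`-tableau: the glued shape is a skew shape, columns strictly increase
in `P`, and rows (including the wrap-around adjacency between the last column
and the copy of column `0` shifted up by `d`) weakly increase in `P`. -/
def IsCylTab {P : Type*} [PartialOrder P] (lam mu : ℕ → ℕ) (d : ℕ)
    (T : ∀ c : Fin (lam 0), Fin (conj lam c - conj mu c) → P) : Prop :=
  (∀ c, c + 1 < lam 0 → conj lam (c + 1) ≤ conj lam c ∧ conj mu (c + 1) ≤ conj mu c) ∧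
  (∀ c, c < lam 0 → conj mu c ≤ conj lam c) ∧
  (0 < lam 0 → conj lam 0 ≤ conj lam (lam 0 - 1) + d ∧ conj mu 0 ≤ conj mu (lam 0 - 1) + d) ∧
  (∀ c p q, p < q → T c p < T c q) ∧
  (∀ (c : Fin (lam 0)) (hc : c.1 + 1 < lam 0)
      (p : Fin (conj lam c.1 - conj mu c.1)) (q : Fin (conj lam (c.1 + 1) - conj mu (c.1 + 1))),
      conj mu c.1 + p.1 = conj mu (c.1 + 1) + q.1 → ¬ T ⟨c.1 + 1, hc⟩ q < T c p) ∧
  (∀ (h0 : 0 < lam 0) (p : Fin (conj lam (lam 0 - 1) - conj mu (lam 0 - 1)))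
      (q : Fin (conj lam 0 - conj mu 0)),
      conj mu (lam 0 - 1) + p.1 + d = conj mu 0 + q.1 →
      ¬ T ⟨0, h0⟩ q < T ⟨lam 0 - 1, Nat.sub_lt h0 Nat.one_pos⟩ p)

/-- The `u`-monomial weight `u^T` of a tableau. -/
def uT {P : Type*} (lam mu : ℕ → ℕ)
    (T : ∀ c : Fin (lam 0), Fin (conj lam c - conj mu c) → P) : MvPolynomial P ℤ :=
  ∏ c, ∏ p, X (T c p)

/-- Number of occurrences of the value `x` in the tableau `T`. -/
def tabCount {P : Type*} (lam mu : ℕ → ℕ)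
    (T : ∀ c : Fin (lam 0), Fin (conj lam c - conj mu c) → P) (x : P) : ℕ :=
  ∑ c, (Finset.univ.filter (fun p => T c p = x)).card

/-- `T` is standard: it contains each element of `P` exactly once. -/
def IsStandardTab {P : Type*} (lam mu : ℕ → ℕ)
    (T : ∀ c : Fin (lam 0), Fin (conj lam c - conj mu c) → P) : Prop :=
  ∀ x : P, tabCount lam mu T x = 1

/-- The chromatic symmetric polynomial of the incomparability graph `inc(P)`,
in the variables `x_0, …, x_{N-1}`. -/
def chromPoly (P : Type*) [Fintype P] [PartialOrder P] (N : ℕ) : MvPolynomial (Fin N) ℤ :=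
  ∑ κ ∈ Finset.univ.filter
      (fun κ : P → Fin N => ∀ a b : P, a ≠ b → ¬(a ≤ b ∨ b ≤ a) → κ a ≠ κ b),
    ∏ v, X (κ v)

end

section Stmt10Aux

open Finset

private abbrev Lam (r c t : ℕ) : ℕ → ℕ := fun i => if i < c then r else if i = c then t else 0
private abbrev RR (r c t : ℕ) : ℕ := if 0 < c then r else t

variable {r c t N : ℕ}

private lemma lam0 : Lam r c t 0 = RR r c t := by
  rcases Nat.eq_zero_or_pos c with h | h <;> simp [Lam, RR, h]

private lemma RRpos (ht : 0 < t) (htr : t ≤ r) : 0 < RR r c t := by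
  unfold RR; split <;> omega

private lemma tRR (htr : t ≤ r) : t ≤ RR r c t := by
  unfold RR; split <;> omega

private lemma nRR : r * c + t = c * RR r c t + t := by
  rcases Nat.eq_zero_or_pos c with h | h
  · subst h; simp
  · simp [RR, h, Nat.mul_comm]

private lemma conj_zero (x : ℕ) : conj (fun _ => 0) x = 0 := by
  have h : {i : ℕ | x < (fun _ => 0) i} = ∅ := by ext i; simp
  simp [conj, h]

private lemma conjL (ht : 0 < t) (htr : t ≤ r) {col : ℕ} (hcol : col < RR r c t) :
    conj (Lam r c t) col = c + (if col < t then 1 else 0) := by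
  have hset : {i | col < Lam r c t i}
      = ↑(Finset.range (c + (if col < t then 1 else 0))) := by
    rcases Nat.eq_zero_or_pos c with hc | hc
    · subst hc
      have hcolt : col < t := by simpa [RR] using hcol
      ext i
      by_cases hi : i = 0 <;> simp [Lam, hi, hcolt] <;> omega
    · have hcolr : col < r := by simpa [RR, hc] using hcol
      ext i
      simp only [Lam, Finset.coe_range, Set.mem_Iio, Set.mem_setOf_eq]
      by_cases h1 : i < c <;> by_cases h2 : i = c <;> by_cases h3 : col < t <;>
        simp [h1, h2, h3] <;> omega
  rw [conj, hset, Set.ncard_coe_finset, Finset.card_range]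

private lemma len_eq (ht : 0 < t) (htr : t ≤ r) {col : ℕ} (hcol : col < RR r c t) :
    conj (Lam r c t) col - conj (fun _ => 0) col = c + (if col < t then 1 else 0) := by
  rw [conjL ht htr hcol, conj_zero, Nat.sub_zero]

private lemma idx_lt (ht : 0 < t) (htr : t ≤ r) {col p : ℕ} (hcol : col < RR r c t)
    (hp : p < c + (if col < t then 1 else 0)) :
    p * RR r c t + col < c * RR r c t + t := by
  have htR : t ≤ RR r c t := tRR htr
  split_ifs at hp with h3
  · have h : p * RR r c t ≤ c * RR r c t := Nat.mul_le_mul_right _ (by omega)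
    omega
  · have h : (p + 1) * RR r c t ≤ c * RR r c t := Nat.mul_le_mul_right _ (by omega)
    have e : (p + 1) * RR r c t = p * RR r c t + RR r c t := by ring
    omega

private lemma div_lt (ht : 0 < t) (htr : t ≤ r) {k : ℕ} (hk : k < c * RR r c t + t) :
    k / RR r c t < c + (if k % RR r c t < t then 1 else 0) := by
  have hRpos : 0 < RR r c t := RRpos ht htr
  have htR : t ≤ RR r c t := tRR htr
  have hdm : RR r c t * (k / RR r c t) + k % RR r c t = k := Nat.div_add_mod k _
  have hmod : k % RR r c t < RR r c t := Nat.mod_lt _ hRpos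
  by_contra hcon
  push_neg at hcon
  split_ifs at hcon with h3
  · have h : (c + 1) * RR r c t ≤ (k / RR r c t) * RR r c t :=
      Nat.mul_le_mul_right _ hcon
    have e1 : (c + 1) * RR r c t = c * RR r c t + RR r c t := by ring
    have e2 : (k / RR r c t) * RR r c t = RR r c t * (k / RR r c t) := Nat.mul_comm _ _
    omega
  · have h : c * RR r c t ≤ (k / RR r c t) * RR r c t := Nat.mul_le_mul_right _ hcon
    have e2 : (k / RR r c t) * RR r c t = RR r c t * (k / RR r c t) := Nat.mul_comm _ _
    omega

private lemma mod_idx {R p col : ℕ} (h : col < R) : (p * R + col) % R = col := by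
  rw [Nat.add_comm, Nat.add_mul_mod_self_right, Nat.mod_eq_of_lt h]

private lemma div_idx {R p col : ℕ} (hR : 0 < R) (h : col < R) : (p * R + col) / R = p := by
  rw [Nat.add_comm, Nat.add_mul_div_right _ _ hR, Nat.div_eq_of_lt h, Nat.zero_add]

private abbrev TabT (r c t N : ℕ) :=
  ∀ col : Fin (Lam r c t 0), Fin (conj (Lam r c t) col - conj (fun _ => 0) col) → Fin N

private lemma col_lt (col : Fin (Lam r c t 0)) : (col : ℕ) < RR r c t := lam0 ▸ col.2

private lemma p_bound (ht : 0 < t) (htr : t ≤ r) {col : Fin (Lam r c t 0)}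
    (p : Fin (conj (Lam r c t) col - conj (fun _ => 0) col)) :
    (p : ℕ) < c + (if (col : ℕ) < t then 1 else 0) :=
  lt_of_lt_of_eq p.2 (len_eq ht htr (col_lt col))

private def toW (T : TabT r c t N) (ht : 0 < t) (htr : t ≤ r) :
    Fin (r * c + t) → Fin N := fun k =>
  T ⟨k.1 % RR r c t, by rw [lam0]; exact Nat.mod_lt _ (RRpos ht htr)⟩
    ⟨k.1 / RR r c t, by
      rw [len_eq ht htr (Nat.mod_lt _ (RRpos ht htr))]
      exact div_lt ht htr (lt_of_lt_of_eq k.2 (@nRR r c t))⟩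

private def toT (w : Fin (r * c + t) → Fin N) (ht : 0 < t) (htr : t ≤ r) :
    TabT r c t N := fun col p =>
  w ⟨p.1 * RR r c t + col.1,
      lt_of_lt_of_eq (idx_lt ht htr (col_lt col) (p_bound ht htr p)) (@nRR r c t).symm⟩

private lemma T_congr (T : TabT r c t N) {col col' : Fin (Lam r c t 0)}
    {p : Fin (conj (Lam r c t) col - conj (fun _ => 0) col)}
    {p' : Fin (conj (Lam r c t) col' - conj (fun _ => 0) col')}
    (h : (col : ℕ) = col') (hp : (p : ℕ) = p') : T col p = T col' p' := by
  obtain ⟨cv, hc⟩ := col; obtain ⟨cv', hc'⟩ := col'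
  dsimp at h
  subst h
  exact congrArg _ (Fin.ext hp)

private lemma mono_of_steps {n : ℕ} {f : Fin n → Fin N}
    (h : ∀ i (hi : i + 1 < n), f ⟨i, Nat.lt_of_succ_lt hi⟩ ≤ f ⟨i + 1, hi⟩) :
    Monotone f := by
  have key : ∀ d (a : ℕ) (ha : a + d < n), f ⟨a, by omega⟩ ≤ f ⟨a + d, ha⟩ := by
    intro d
    induction d with
    | zero => intro a ha; exact le_of_eq (congrArg f (Fin.ext rfl))
    | succ d ih =>
      intro a ha
      refine le_trans (ih a (by omega)) (le_trans (h (a + d) (by omega)) ?_)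
      exact le_of_eq (congrArg f (Fin.ext rfl))
  intro a b hab
  have hab' : (a : ℕ) ≤ b := hab
  have e1 : a = ⟨(a : ℕ), a.2⟩ := Fin.ext rfl
  have e2 : b = ⟨(a : ℕ) + ((b : ℕ) - a), by omega⟩ :=
    Fin.ext (show (b : ℕ) = (a : ℕ) + ((b : ℕ) - (a : ℕ)) by omega)
  rw [e1, e2]
  exact key _ _ _

/-- spacing condition -/
private def Sp {n N : ℕ} (K : ℕ) (w : Fin n → Fin N) : Prop :=
  ∀ i (h : i + K < n),
    w ⟨i, Nat.lt_of_le_of_lt (Nat.le_add_right _ _) h⟩ < w ⟨i + K, h⟩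

private lemma sp_iff_count {n K : ℕ} {w : Fin n → Fin N} (hw : Monotone w) :
    Sp K w ↔ ∀ x, (univ.filter (fun i => w i = x)).card ≤ K := by
  constructor
  · intro H x
    by_contra hc
    push_neg at hc
    set S := univ.filter (fun i => w i = x) with hS
    have hne : S.Nonempty := card_pos.mp (by omega)
    have hax : w (S.min' hne) = x := (mem_filter.mp (S.min'_mem hne)).2
    have hbx : w (S.max' hne) = x := (mem_filter.mp (S.max'_mem hne)).2
    have hsub : S ⊆ Finset.Icc (S.min' hne) (S.max' hne) :=
      fun i hi => mem_Icc.mpr ⟨S.min'_le i hi, S.le_max' i hi⟩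
    have hcard : S.card ≤ (S.max' hne : ℕ) + 1 - (S.min' hne : ℕ) := by
      have h1 := Finset.card_le_card hsub
      rwa [Fin.card_Icc] at h1
    have hb : ((S.max' hne : ℕ)) < n := (S.max' hne).2
    have hKn : (S.min' hne : ℕ) + K < n := by omega
    have h1 := H (S.min' hne) hKn
    have e : (⟨((S.min' hne : ℕ)), _⟩ : Fin n) = S.min' hne := Fin.ext rfl
    rw [e] at h1
    have h3 : w (S.min' hne) ≤ w ⟨(S.min' hne : ℕ) + K, hKn⟩ :=
      hw (by simp [Fin.le_def])
    have h2 : w ⟨(S.min' hne : ℕ) + K, hKn⟩ ≤ w (S.max' hne) :=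
      hw (by simp [Fin.le_def]; omega)
    have hx : w ⟨(S.min' hne : ℕ) + K, hKn⟩ = x :=
      le_antisymm (hbx ▸ h2) (hax ▸ h3)
    rw [hx, hax] at h1
    exact lt_irrefl x h1
  · intro H i h
    by_contra hc
    push_neg at hc
    set a : Fin n := ⟨i, Nat.lt_of_le_of_lt (Nat.le_add_right _ _) h⟩ with ha
    set b : Fin n := ⟨i + K, h⟩ with hb
    have hIcc : Finset.Icc a b ⊆ univ.filter (fun j => w j = w a) := by
      intro j hj
      rw [mem_Icc] at hj
      exact mem_filter.mpr ⟨mem_univ _,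
        le_antisymm (le_trans (hw hj.2) hc) (hw hj.1)⟩
    have h1 := Finset.card_le_card hIcc
    rw [Fin.card_Icc] at h1
    have h2 := H (w a)
    have e1 : (a : ℕ) = i := rfl
    have e2 : (b : ℕ) = i + K := rfl
    omega

private lemma toW_mono (ht : 0 < t) (htr : t ≤ r) {T : TabT r c t N}
    (hT : IsCylTab (Lam r c t) (fun _ => 0) 1 T) : Monotone (toW T ht htr) := by
  obtain ⟨h1, h2, h3, h4, h5, h6⟩ := hT
  have hRpos : 0 < RR r c t := RRpos ht htr
  apply mono_of_steps
  intro k hk1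
  have hd := Nat.div_add_mod k (RR r c t)
  have hmod : k % RR r c t < RR r c t := Nat.mod_lt _ hRpos
  have hmc := Nat.mul_comm (RR r c t) (k / RR r c t)
  have hb1 : k / RR r c t < c + (if k % RR r c t < t then 1 else 0) :=
    div_lt ht htr (lt_of_lt_of_eq (Nat.lt_of_succ_lt hk1) (@nRR r c t))
  by_cases hcol : k % RR r c t + 1 < RR r c t
  · have e : k + 1 = (k / RR r c t) * RR r c t + (k % RR r c t + 1) := by omega
    have hm : (k + 1) % RR r c t = k % RR r c t + 1 := by rw [e, mod_idx hcol]
    have hdv : (k + 1) / RR r c t = k / RR r c t := by rw [e, div_idx hRpos hcol]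
    have hb2 : k / RR r c t < c + (if k % RR r c t + 1 < t then 1 else 0) := by
      have h2' := @div_lt r c t ht htr (k + 1) (lt_of_lt_of_eq hk1 (@nRR r c t))
      simp only [hm, hdv] at h2'
      exact h2'
    have hc5 : (k % RR r c t) + 1 < Lam r c t 0 := by rw [lam0]; exact hcol
    refine not_lt.mp ?_
    have eA : toW T ht htr ⟨k + 1, hk1⟩
        = T ⟨k % RR r c t + 1, hc5⟩
            ⟨k / RR r c t, lt_of_lt_of_eq hb2 (len_eq ht htr hcol).symm⟩ :=
      T_congr T hm hdv
    have eB : toW T ht htr ⟨k, Nat.lt_of_succ_lt hk1⟩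
        = T ⟨k % RR r c t, by rw [lam0]; exact hmod⟩
            ⟨k / RR r c t, lt_of_lt_of_eq hb1 (len_eq ht htr hmod).symm⟩ :=
      T_congr T rfl rfl
    rw [eA, eB]
    refine h5 ⟨k % RR r c t, by rw [lam0]; exact hmod⟩ hc5 _ _ ?_
    show conj (fun _ => 0) (k % RR r c t) + (k / RR r c t)
        = conj (fun _ => 0) (k % RR r c t + 1) + (k / RR r c t)
    rw [conj_zero, conj_zero]
  · have hcR : k % RR r c t = RR r c t - 1 := by omega
    have e : k + 1 = (k / RR r c t + 1) * RR r c t + 0 := by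
      have e1 : (k / RR r c t + 1) * RR r c t = k / RR r c t * RR r c t + RR r c t := by ring
      omega
    have hm : (k + 1) % RR r c t = 0 := by rw [e, mod_idx hRpos]
    have hdv : (k + 1) / RR r c t = k / RR r c t + 1 := by rw [e, div_idx hRpos hRpos]
    have hb2 : k / RR r c t + 1 < c + 1 := by
      have h2' := @div_lt r c t ht htr (k + 1) (lt_of_lt_of_eq hk1 (@nRR r c t))
      simp only [hm, hdv] at h2'
      simpa [ht] using h2'
    have h0 : 0 < Lam r c t 0 := by rw [lam0]; exact hRpos
    have hL1 : Lam r c t 0 - 1 = k % RR r c t := by rw [lam0]; omega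
    refine not_lt.mp ?_
    have eA : toW T ht htr ⟨k + 1, hk1⟩
        = T ⟨0, h0⟩ ⟨k / RR r c t + 1, by
            show k / RR r c t + 1 < conj (Lam r c t) 0 - conj (fun _ => 0) 0
            rw [len_eq ht htr hRpos]
            simpa [ht] using hb2⟩ :=
      T_congr T hm hdv
    have eB : toW T ht htr ⟨k, Nat.lt_of_succ_lt hk1⟩
        = T ⟨Lam r c t 0 - 1, Nat.sub_lt h0 Nat.one_pos⟩
            ⟨k / RR r c t, by
              show k / RR r c t < conj (Lam r c t) (Lam r c t 0 - 1)
                - conj (fun _ => 0) (Lam r c t 0 - 1)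
              rw [hL1, len_eq ht htr hmod]
              exact hb1⟩ :=
      T_congr T hL1.symm rfl
    rw [eA, eB]
    refine h6 h0 _ _ ?_
    show conj (fun _ => 0) (Lam r c t 0 - 1) + (k / RR r c t) + 1
        = conj (fun _ => 0) 0 + (k / RR r c t + 1)
    rw [conj_zero, conj_zero]
    omega

private lemma toW_spaced (ht : 0 < t) (htr : t ≤ r) {T : TabT r c t N}
    (hT : IsCylTab (Lam r c t) (fun _ => 0) 1 T) : Sp (RR r c t) (toW T ht htr) := by
  obtain ⟨h1, h2, h3, h4, h5, h6⟩ := hT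
  intro i h
  have hRpos : 0 < RR r c t := RRpos ht htr
  have hm : (i + RR r c t) % RR r c t = i % RR r c t := Nat.add_mod_right i _
  have hdv : (i + RR r c t) / RR r c t = i / RR r c t + 1 := Nat.add_div_right i hRpos
  have hmod : i % RR r c t < RR r c t := Nat.mod_lt _ hRpos
  have hb1 : i / RR r c t < c + (if i % RR r c t < t then 1 else 0) :=
    @div_lt r c t ht htr i (by have := @nRR r c t; omega)
  have hb2 : i / RR r c t + 1 < c + (if i % RR r c t < t then 1 else 0) := by
    have h2' := @div_lt r c t ht htr (i + RR r c t) (by have := @nRR r c t; omega)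
    simp only [hm, hdv] at h2'
    exact h2'
  have eA : toW T ht htr ⟨i + RR r c t, h⟩
      = T ⟨i % RR r c t, by rw [lam0]; exact hmod⟩
          ⟨i / RR r c t + 1, lt_of_lt_of_eq hb2 (len_eq ht htr hmod).symm⟩ :=
    T_congr T hm hdv
  have eB : toW T ht htr ⟨i, Nat.lt_of_le_of_lt (Nat.le_add_right _ _) h⟩
      = T ⟨i % RR r c t, by rw [lam0]; exact hmod⟩
          ⟨i / RR r c t, lt_of_lt_of_eq hb1 (len_eq ht htr hmod).symm⟩ :=
    T_congr T rfl rfl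
  rw [eA, eB]
  refine h4 _ _ _ ?_
  exact Fin.mk_lt_mk.mpr (Nat.lt_succ_self _)

private lemma toT_cyltab (ht : 0 < t) (htr : t ≤ r) {w : Fin (r * c + t) → Fin N}
    (hmono : Monotone w) (hsp : Sp (RR r c t) w) :
    IsCylTab (Lam r c t) (fun _ => 0) 1 (toT w ht htr) := by
  have hRpos : 0 < RR r c t := RRpos ht htr
  have htR : t ≤ RR r c t := tRR htr
  refine ⟨?_, ?_, ?_, ?_, ?_, ?_⟩
  · intro col hcol
    have hcR : col + 1 < RR r c t := by rwa [lam0] at hcol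
    rw [conjL ht htr hcR, conjL ht htr (by omega), conj_zero, conj_zero]
    refine ⟨?_, le_refl _⟩
    split_ifs <;> omega
  · intro col hcol
    rw [conj_zero]; exact Nat.zero_le _
  · intro h0
    rw [lam0, conjL ht htr hRpos, conjL ht htr (by omega : RR r c t - 1 < RR r c t),
      conj_zero, conj_zero]
    constructor
    · split_ifs <;> omega
    · omega
  · intro col p q hpq
    have hpq' : (p : ℕ) < (q : ℕ) := hpq
    have hq := p_bound ht htr q
    have hiq : (q : ℕ) * RR r c t + col < r * c + t :=
      lt_of_lt_of_eq (idx_lt ht htr (col_lt col) hq) (@nRR r c t).symm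
    have hmul : ((p : ℕ) + 1) * RR r c t ≤ (q : ℕ) * RR r c t :=
      Nat.mul_le_mul_right _ (by omega)
    have emul : ((p : ℕ) + 1) * RR r c t = (p : ℕ) * RR r c t + RR r c t := by ring
    have hstep : (p : ℕ) * RR r c t + col + RR r c t < r * c + t := by omega
    have hlt := hsp ((p : ℕ) * RR r c t + (col : ℕ)) hstep
    have hle : w ⟨(p : ℕ) * RR r c t + col + RR r c t, hstep⟩
        ≤ w ⟨(q : ℕ) * RR r c t + col, hiq⟩ :=
      hmono (Fin.mk_le_mk.mpr (by omega))
    show w ⟨(p : ℕ) * RR r c t + col, _⟩ < w ⟨(q : ℕ) * RR r c t + col, _⟩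
    exact lt_of_lt_of_le hlt hle
  · intro col hc p q heq
    have heq' : (p : ℕ) = (q : ℕ) := by
      have e1 := conj_zero ((col : ℕ))
      have e2 := conj_zero ((col : ℕ) + 1)
      omega
    have emul : (p : ℕ) * RR r c t = (q : ℕ) * RR r c t := by rw [heq']
    refine not_lt.mpr ?_
    show w ⟨(p : ℕ) * RR r c t + col, _⟩ ≤ w ⟨(q : ℕ) * RR r c t + (col + 1), _⟩
    exact hmono (Fin.mk_le_mk.mpr (by omega))
  · intro h0 p q heq
    have heq' : (q : ℕ) = (p : ℕ) + 1 := by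
      have e1 := conj_zero (Lam r c t 0 - 1)
      have e2 := conj_zero 0
      omega
    have e2 : (q : ℕ) * RR r c t = (p : ℕ) * RR r c t + RR r c t := by
      rw [heq']; ring
    have hLR : Lam r c t 0 = RR r c t := lam0
    refine not_lt.mpr ?_
    show w ⟨(p : ℕ) * RR r c t + (Lam r c t 0 - 1), _⟩ ≤ w ⟨(q : ℕ) * RR r c t + 0, _⟩
    exact hmono (Fin.mk_le_mk.mpr (by omega))

private lemma toW_toT (ht : 0 < t) (htr : t ≤ r) (w : Fin (r * c + t) → Fin N) :
    toW (toT w ht htr) ht htr = w := by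
  funext k
  show w ⟨k.1 / RR r c t * RR r c t + k.1 % RR r c t, _⟩ = w k
  refine congrArg w (Fin.ext ?_)
  show k.1 / RR r c t * RR r c t + k.1 % RR r c t = k.1
  have := Nat.div_add_mod k.1 (RR r c t)
  have e : k.1 / RR r c t * RR r c t = RR r c t * (k.1 / RR r c t) := Nat.mul_comm _ _
  omega

private lemma toT_toW (ht : 0 < t) (htr : t ≤ r) (T : TabT r c t N) :
    toT (toW T ht htr) ht htr = T := by
  funext col p
  show T ⟨(p.1 * RR r c t + col.1) % RR r c t, _⟩ ⟨(p.1 * RR r c t + col.1) / RR r c t, _⟩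
      = T col p
  exact T_congr T (mod_idx (col_lt col)) (div_idx (RRpos ht htr) (col_lt col))

private lemma count_r_iff (ht : 0 < t) (htr : t ≤ r) {w : Fin (r * c + t) → Fin N}
    (hmono : Monotone w) :
    (∀ x, (univ.filter (fun i => w i = x)).card ≤ r) ↔ Sp (RR r c t) w := by
  rcases Nat.eq_zero_or_pos c with hc | hc
  · subst hc
    constructor
    · intro _ i hi
      exfalso
      have hR : RR r 0 t = t := by simp [RR]
      omega
    · intro _ x
      have h1 := Finset.card_le_univ (univ.filter (fun i => w i = x))
      have h2 : Fintype.card (Fin (r * 0 + t)) = r * 0 + t := Fintype.card_fin _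
      omega
  · have hR : RR r c t = r := by simp [RR, hc]
    rw [hR]
    exact (sp_iff_count hmono).symm

private def tabEquiv (ht : 0 < t) (htr : t ≤ r) (N : ℕ) :
    {T : TabT r c t N // IsCylTab (Lam r c t) (fun _ => 0) 1 T} ≃
    {w : Fin (r * c + t) → Fin N //
      Monotone w ∧ ∀ x, (univ.filter (fun i => w i = x)).card ≤ r} where
  toFun T := ⟨toW T.1 ht htr, toW_mono ht htr T.2,
    (count_r_iff ht htr (toW_mono ht htr T.2)).mpr (toW_spaced ht htr T.2)⟩
  invFun w := ⟨toT w.1 ht htr,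
    toT_cyltab ht htr w.2.1 ((count_r_iff ht htr w.2.1).mp w.2.2)⟩
  left_inv T := Subtype.ext (toT_toW ht htr T.1)
  right_inv w := Subtype.ext (toW_toT ht htr w.1)

private lemma sigma_fin_ext {M : ℕ} {g : Fin M → ℕ} {a b : Σ col : Fin M, Fin (g col)}
    (h1 : (a.1 : ℕ) = b.1) (h2 : (a.2 : ℕ) = b.2) : a = b := by
  obtain ⟨⟨a1, ha1⟩, a2⟩ := a
  obtain ⟨⟨b1, hb1⟩, b2⟩ := b
  dsimp at h1 h2
  subst h1
  have h3 : a2 = b2 := Fin.ext h2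
  exact congrArg _ h3

private def cellEquiv (ht : 0 < t) (htr : t ≤ r) :
    (Σ col : Fin (Lam r c t 0), Fin (conj (Lam r c t) col - conj (fun _ => 0) col)) ≃
      Fin (r * c + t) where
  toFun x := ⟨x.2.1 * RR r c t + x.1.1,
    lt_of_lt_of_eq (idx_lt ht htr (col_lt x.1) (p_bound ht htr x.2)) (@nRR r c t).symm⟩
  invFun k := ⟨⟨k.1 % RR r c t, by rw [lam0]; exact Nat.mod_lt _ (RRpos ht htr)⟩,
    ⟨k.1 / RR r c t, by
      rw [len_eq ht htr (Nat.mod_lt _ (RRpos ht htr))]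
      exact div_lt ht htr (lt_of_lt_of_eq k.2 (@nRR r c t))⟩⟩
  left_inv x := sigma_fin_ext (mod_idx (col_lt x.1)) (div_idx (RRpos ht htr) (col_lt x.1))
  right_inv k := by
    refine Fin.ext ?_
    show k.1 / RR r c t * RR r c t + k.1 % RR r c t = k.1
    have := Nat.div_add_mod k.1 (RR r c t)
    have e : k.1 / RR r c t * RR r c t = RR r c t * (k.1 / RR r c t) := Nat.mul_comm _ _
    omega

private lemma uT_eq (ht : 0 < t) (htr : t ≤ r) (T : TabT r c t N) :
    uT (Lam r c t) (fun _ => 0) T = ∏ k, X (toW T ht htr k) := by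
  unfold uT
  rw [Finset.prod_sigma' Finset.univ (fun _ => Finset.univ) (fun a b => X (T a b)),
    Finset.univ_sigma_univ]
  refine Fintype.prod_equiv (cellEquiv ht htr) _ _ (fun x => ?_)
  exact congrArg X
    (Eq.symm (T_congr T (mod_idx (col_lt x.1)) (div_idx (RRpos ht htr) (col_lt x.1))))

private lemma count_ofFn {n N : ℕ} (w : Fin n → Fin N) (x : Fin N) :
    Multiset.count x ↑(List.ofFn w) = (univ.filter (fun i => w i = x)).card := by
  rw [← Fin.univ_val_map, Multiset.count_map, Finset.card_def, Finset.filter_val]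
  exact congrArg Multiset.card (Multiset.filter_congr (fun a _ => ⟨Eq.symm, Eq.symm⟩))

private def fromSym {n N : ℕ} (s : Sym (Fin N) n) : Fin n → Fin N :=
  fun i => (Multiset.sort s.1 (· ≤ ·)).get
    ⟨i.1, by rw [Multiset.length_sort, s.2]; exact i.2⟩

private lemma fromSym_mono {n N : ℕ} (s : Sym (Fin N) n) : Monotone (fromSym s) := by
  intro a b hab
  have hs := Multiset.pairwise_sort s.1 (· ≤ ·)
  exact hs.rel_get_of_le (Fin.mk_le_mk.mpr (Fin.le_def.mp hab))

private lemma ofFn_fromSym {n N : ℕ} (s : Sym (Fin N) n) :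
    List.ofFn (fromSym s) = Multiset.sort s.1 (· ≤ ·) := by
  apply List.ext_get
  · simp [Multiset.length_sort, s.2]
  · intro i h1 h2
    simp [fromSym, List.get_ofFn]

private lemma coe_ofFn_fromSym {n N : ℕ} (s : Sym (Fin N) n) :
    (↑(List.ofFn (fromSym s)) : Multiset (Fin N)) = s.1 := by
  rw [ofFn_fromSym, Multiset.sort_eq]

private lemma sort_ofFn {n N : ℕ} (w : Fin n → Fin N) (hw : Monotone w) :
    Multiset.sort ↑(List.ofFn w) (· ≤ ·) = List.ofFn w :=
  List.Perm.eq_of_pairwise' (Multiset.pairwise_sort _ _) hw.sortedLE_ofFn.pairwise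
    (Multiset.coe_eq_coe.mp (Multiset.sort_eq _ _))

private def symEquiv (n r N : ℕ) :
    {w : Fin n → Fin N // Monotone w ∧ ∀ x, (univ.filter (fun i => w i = x)).card ≤ r} ≃
    {s : Sym (Fin N) n // ∀ x, Multiset.count x s.1 ≤ r} where
  toFun w := ⟨⟨↑(List.ofFn w.1), by rw [Multiset.coe_card, List.length_ofFn]⟩, fun x => by
    have h := count_ofFn w.1 x
    show Multiset.count x ↑(List.ofFn w.1) ≤ r
    rw [h]; exact w.2.2 x⟩
  invFun s := ⟨fromSym s.1, fromSym_mono s.1, fun x => by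
    have h := s.2 x
    rw [← coe_ofFn_fromSym s.1, count_ofFn] at h
    exact h⟩
  left_inv w := by
    apply Subtype.ext
    funext i
    show (Multiset.sort (↑(List.ofFn w.1) : Multiset (Fin N)) (· ≤ ·)).get _ = w.1 i
    have hs := sort_ofFn w.1 w.2.1
    rw [List.get_of_eq hs]
    simp [List.get_ofFn]
  right_inv s := Subtype.ext (Subtype.ext (coe_ofFn_fromSym s.1))

private lemma parts_iff {n N : ℕ} (s : Sym (Fin N) n) (r : ℕ) :
    (∀ p ∈ (Nat.Partition.ofSym s).parts, p ≤ r) ↔ ∀ x, Multiset.count x s.1 ≤ r := by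
  constructor
  · intro h x
    by_cases hx : x ∈ s.1
    · exact h _ (Multiset.mem_map.mpr ⟨x, Multiset.mem_dedup.mpr hx, rfl⟩)
    · rw [Multiset.count_eq_zero.mpr hx]
      exact Nat.zero_le _
  · intro h p hp
    obtain ⟨a, -, rfl⟩ := Multiset.mem_map.mp hp
    exact h a

private lemma rhs_eq (n r N : ℕ) :
    (∑ μ ∈ univ.filter (fun μ : Nat.Partition n => ∀ p ∈ μ.parts, p ≤ r),
        msymm (Fin N) ℤ μ)
      = ∑ s : {s : Sym (Fin N) n // ∀ x, Multiset.count x s.1 ≤ r},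
          ((s.1.1.map X).prod : MvPolynomial (Fin N) ℤ) := by
  have h1 : ∀ μ : Nat.Partition n, msymm (Fin N) ℤ μ
      = ∑ s ∈ univ.filter (fun s : Sym (Fin N) n => Nat.Partition.ofSym s = μ),
          ((s.1.map X).prod : MvPolynomial (Fin N) ℤ) := by
    intro μ
    rw [msymm]
    exact (Finset.sum_subtype
      (univ.filter (fun s : Sym (Fin N) n => Nat.Partition.ofSym s = μ))
      (fun x => by simp only [Finset.mem_filter, Finset.mem_univ, true_and])
      (fun s : Sym (Fin N) n => ((s.1.map X).prod : MvPolynomial (Fin N) ℤ))).symm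
  calc (∑ μ ∈ univ.filter (fun μ : Nat.Partition n => ∀ p ∈ μ.parts, p ≤ r),
        msymm (Fin N) ℤ μ)
      = ∑ μ ∈ univ.filter (fun μ : Nat.Partition n => ∀ p ∈ μ.parts, p ≤ r),
          ∑ s ∈ univ.filter (fun s : Sym (Fin N) n => Nat.Partition.ofSym s = μ),
            ((s.1.map X).prod : MvPolynomial (Fin N) ℤ) :=
        Finset.sum_congr rfl (fun μ _ => h1 μ)
    _ = ∑ s ∈ univ.filter (fun s : Sym (Fin N) n =>
          Nat.Partition.ofSym s ∈ univ.filter (fun μ : Nat.Partition n => ∀ p ∈ μ.parts, p ≤ r)),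
            ((s.1.map X).prod : MvPolynomial (Fin N) ℤ) :=
        Finset.sum_fiberwise_eq_sum_filter _ _ _ _
    _ = ∑ s ∈ univ.filter (fun s : Sym (Fin N) n => ∀ x, Multiset.count x s.1 ≤ r),
            ((s.1.map X).prod : MvPolynomial (Fin N) ℤ) := by
        refine Finset.sum_congr ?_ (fun _ _ => rfl)
        refine Finset.filter_congr (fun s _ => ?_)
        simp only [Finset.mem_filter, Finset.mem_univ, true_and]
        exact parts_iff s r
    _ = ∑ s : {s : Sym (Fin N) n // ∀ x, Multiset.count x s.1 ≤ r},
          ((s.1.1.map X).prod : MvPolynomial (Fin N) ℤ) :=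
        Finset.sum_subtype
          (univ.filter (fun s : Sym (Fin N) n => ∀ x, Multiset.count x s.1 ≤ r))
          (fun x => by simp only [Finset.mem_filter, Finset.mem_univ, true_and])
          (fun s : Sym (Fin N) n => ((s.1.map X).prod : MvPolynomial (Fin N) ℤ))

end Stmt10Aux


/-- for `λ = (r^c, t)` with `0 < t ≤ r`, a partition of `n = rc + t`,
the cylindric Schur function `s_{(r^c t)/∅/1}(x)` equals the sum of the monomial
symmetric functions `m_μ(x)` over all partitions `μ` of `n` with largest part at
most `r` (as polynomials in any number `N` of variables). -/
theorem stmt_10 (r c t : ℕ) (ht : 0 < t) (htr : t ≤ r) (N : ℕ) :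
    (∑ T : {T : ∀ col : Fin ((fun i => if i < c then r else if i = c then t else 0) 0),
          Fin (conj (fun i => if i < c then r else if i = c then t else 0) col
            - conj (fun _ => 0) col) → Fin N //
        IsCylTab (fun i => if i < c then r else if i = c then t else 0) (fun _ => 0) 1 T},
      uT (fun i => if i < c then r else if i = c then t else 0) (fun _ => 0) T.1)
    = ∑ μ ∈ Finset.univ.filter
        (fun μ : Nat.Partition (r * c + t) => ∀ p ∈ μ.parts, p ≤ r),
        msymm (Fin N) ℤ μ := by
  have e1 : (∑ T : {T : TabT r c t N // IsCylTab (Lam r c t) (fun _ => 0) 1 T},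
        uT (Lam r c t) (fun _ => 0) T.1)
      = ∑ w : {w : Fin (r * c + t) → Fin N //
            Monotone w ∧ ∀ x, (Finset.univ.filter (fun i => w i = x)).card ≤ r},
          ∏ k, X (w.1 k) := by
    refine Fintype.sum_equiv (tabEquiv ht htr N) _ _ (fun T => ?_)
    exact uT_eq ht htr T.1
  have e2 : (∑ w : {w : Fin (r * c + t) → Fin N //
            Monotone w ∧ ∀ x, (Finset.univ.filter (fun i => w i = x)).card ≤ r},
          ∏ k, X (w.1 k))
      = ∑ s : {s : Sym (Fin N) (r * c + t) // ∀ x, Multiset.count x s.1 ≤ r},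
          ((s.1.1.map X).prod : MvPolynomial (Fin N) ℤ) := by
    refine Fintype.sum_equiv (symEquiv (r * c + t) r N) _ _ (fun w => ?_)
    show (∏ k, X (w.1 k)) = ((↑(List.ofFn w.1) : Multiset (Fin N)).map X).prod
    rw [Multiset.map_coe, Multiset.prod_coe, List.map_ofFn, List.prod_ofFn]
    rfl
  exact (e1.trans e2).trans (rhs_eq (r * c + t) r N).symm
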